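/- For every positive integer n, the number N of fractions in the Farey sequence of order n satisfies N > n²/4; equivalently, 1 + Σ_{i=1}^{n} φ(i) > n²/4, where φ is Euler's totient function. -/

import Mathlib

/-- The Farey fractions of order `n`: the rationals in `[0,1]` whose (reduced) denominator
is at most `n`. -/
def fareySet (n : ℕ) : Finset ℚ :=
  ((Finset.range (n + 1) ×ˢ Finset.range (n + 1)).image fun p => (p.1 : ℚ) / (p.2 : ℚ)).filter
    fun q => 0 ≤ q ∧ q ≤ 1 ∧ q.den ≤ n

/-- The Farey sequence of order `n`: the Farey fractions of order `n` listed in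
increasing order. -/
def fareyList (n : ℕ) : List ℚ := (fareySet n).sort (· ≤ ·)

/-- Two reduced fractions `q = a/b` and `q' = a'/b'` are similarly ordered if
`(a' - a) * (b' - b) ≥ 0`. -/
def SimilarlyOrdered (q q' : ℚ) : Prop :=
  0 ≤ (q'.num - q.num) * ((q'.den : ℤ) - (q.den : ℤ))

open Finset


private lemma coprime_Icc_card (b : ℕ) :
    #{a ∈ Finset.Icc 1 b | b.Coprime a} = Nat.totient b := by
  rw [← Nat.filter_coprime_Ico_eq_totient b 1]
  congr 1
  rw [add_comm, Finset.Ico_add_one_right_eq_Icc]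

private lemma cardP (n : ℕ) :
    #{p ∈ Finset.Icc 1 n ×ˢ Finset.Icc 1 n | p.1 ≤ p.2 ∧ p.2.Coprime p.1}
      = ∑ i ∈ Finset.Icc 1 n, Nat.totient i := by
  rw [Finset.card_eq_sum_card_fiberwise (f := Prod.snd) (t := Finset.Icc 1 n)
    (fun p hp => (Finset.mem_filter.1 hp).1 |> Finset.mem_product.1 |>.2)]
  refine Finset.sum_congr rfl fun b hb => ?_
  rw [← coprime_Icc_card b]
  apply Finset.card_bij (fun p _ => p.1)
  · rintro ⟨x, y⟩ h
    simp only [Finset.mem_filter, Finset.mem_product, Finset.mem_Icc] at h ⊢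
    obtain ⟨⟨⟨⟨hx1, _⟩, _⟩, hxy, hc⟩, rfl⟩ := h
    exact ⟨⟨hx1, hxy⟩, hc⟩
  · rintro ⟨x, y⟩ h ⟨x', y'⟩ h' (rfl : x = x')
    simp only [Finset.mem_filter] at h h'
    rw [Prod.ext_iff]
    exact ⟨rfl, h.2.trans h'.2.symm⟩
  · intro a ha
    simp only [Finset.mem_filter, Finset.mem_Icc] at ha hb ⊢
    refine ⟨⟨a, b⟩, ?_, rfl⟩
    simp only [Finset.mem_filter, Finset.mem_product, Finset.mem_Icc]
    exact ⟨⟨⟨⟨ha.1.1, ha.1.2.trans hb.2⟩, hb⟩, ha.1.2, ha.2⟩, trivial⟩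

private lemma two_S_ge (n : ℕ) (hn : 1 ≤ n) :
    #{p ∈ Finset.Icc 1 n ×ˢ Finset.Icc 1 n | p.1.Coprime p.2} + 1
      ≤ 2 * ∑ i ∈ Finset.Icc 1 n, Nat.totient i := by
  classical
  set s := Finset.Icc 1 n ×ˢ Finset.Icc 1 n with hs
  set A := {p ∈ s | p.1 ≤ p.2 ∧ p.2.Coprime p.1} with hA
  set B := {p ∈ s | p.2 ≤ p.1 ∧ p.1.Coprime p.2} with hB
  have hUnion : {p ∈ s | p.1.Coprime p.2} = A ∪ B := by
    ext ⟨x, y⟩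
    simp only [hA, hB, Finset.mem_filter, Finset.mem_union]
    constructor
    · rintro ⟨hm, hc⟩
      rcases le_total x y with h | h
      · exact Or.inl ⟨hm, h, hc.symm⟩
      · exact Or.inr ⟨hm, h, hc⟩
    · rintro (⟨hm, _, hc⟩ | ⟨hm, _, hc⟩)
      · exact ⟨hm, hc.symm⟩
      · exact ⟨hm, hc⟩
  have hBcard : B.card = A.card := by
    have : B = A.image Prod.swap := by
      ext ⟨x, y⟩
      simp only [hA, hB, Finset.mem_image, Finset.mem_filter, hs, Finset.mem_product]
      constructor
      · rintro ⟨⟨hx, hy⟩, hle, hc⟩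
        exact ⟨⟨y, x⟩, ⟨⟨hy, hx⟩, hle, hc⟩, rfl⟩
      · rintro ⟨⟨a, b⟩, ⟨⟨ha, hb⟩, hle, hc⟩, h⟩
        obtain ⟨rfl, rfl⟩ := Prod.mk.injEq .. ▸ h
        exact ⟨⟨hb, ha⟩, hle, hc⟩
    rw [this, Finset.card_image_of_injective _ Prod.swap_injective]
  have hmem : ((1, 1) : ℕ × ℕ) ∈ A ∩ B := by
    simp [hA, hB, hs, Finset.mem_product, Finset.mem_Icc, hn, Nat.coprime_one_left 1]
  have h1 : 1 ≤ (A ∩ B).card := Finset.card_pos.2 ⟨_, hmem⟩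
  have := Finset.card_union_add_card_inter A B
  have hAcard : A.card = ∑ i ∈ Finset.Icc 1 n, Nat.totient i := cardP n
  rw [hUnion]
  omega

private lemma bad_bound (n : ℕ) :
    n ^ 2 ≤ #{p ∈ Finset.Icc 1 n ×ˢ Finset.Icc 1 n | p.1.Coprime p.2}
        + ∑ q ∈ {q ∈ Finset.Icc 2 n | q.Prime}, (n / q) ^ 2 := by
  classical
  set s := Finset.Icc 1 n ×ˢ Finset.Icc 1 n with hs
  have hcard : s.card = n ^ 2 := by
    simp [hs, Nat.card_Icc, sq]
  have hsplit := Finset.card_filter_add_card_filter_not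
    (s := s) (p := fun p => p.1.Coprime p.2)
  have hsub : {p ∈ s | ¬ p.1.Coprime p.2} ⊆
      ({q ∈ Finset.Icc 2 n | q.Prime}).biUnion
        (fun q => {p ∈ s | q ∣ p.1 ∧ q ∣ p.2}) := by
    rintro ⟨x, y⟩ hp
    simp only [Finset.mem_filter, hs, Finset.mem_product, Finset.mem_Icc] at hp
    obtain ⟨⟨⟨hx1, hxn⟩, hy1, hyn⟩, hnc⟩ := hp
    have hg : Nat.gcd x y ≠ 1 := hnc
    set q := (Nat.gcd x y).minFac with hq
    have hqp : q.Prime := Nat.minFac_prime hg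
    have hqx : q ∣ x := (Nat.minFac_dvd _).trans (Nat.gcd_dvd_left x y)
    have hqy : q ∣ y := (Nat.minFac_dvd _).trans (Nat.gcd_dvd_right x y)
    have hqn : q ≤ n := le_trans (Nat.le_of_dvd hx1 hqx) hxn
    refine Finset.mem_biUnion.2 ⟨q, ?_, ?_⟩
    · exact Finset.mem_filter.2 ⟨Finset.mem_Icc.2 ⟨hqp.two_le, hqn⟩, hqp⟩
    · refine Finset.mem_filter.2 ⟨?_, hqx, hqy⟩
      exact Finset.mem_product.2 ⟨Finset.mem_Icc.2 ⟨hx1, hxn⟩, Finset.mem_Icc.2 ⟨hy1, hyn⟩⟩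
  have hone : ∀ q : ℕ, ({p ∈ s | q ∣ p.1 ∧ q ∣ p.2}).card = (n / q) ^ 2 := by
    intro q
    have : {p ∈ s | q ∣ p.1 ∧ q ∣ p.2}
        = {a ∈ Finset.Icc 1 n | q ∣ a} ×ˢ {a ∈ Finset.Icc 1 n | q ∣ a} := by
      rw [hs, Finset.filter_product]
    rw [this, Finset.card_product]
    have : {a ∈ Finset.Icc 1 n | q ∣ a} = {a ∈ Finset.Ioc 0 n | q ∣ a} := by
      congr 1
    rw [this, Nat.Ioc_filter_dvd_card_eq_div, sq]
  calc n ^ 2 = _ := (hcard ▸ hsplit).symm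
    _ ≤ _ := by
        gcongr
        exact le_trans (Finset.card_le_card hsub)
          (le_trans (Finset.card_biUnion_le)
            (le_of_eq (Finset.sum_congr rfl fun q _ => hone q)))

private lemma tele : ∀ n : ℕ, 16 ≤ n →
    ∑ d ∈ Finset.Icc 17 n, (1 : ℝ) / (d * (d - 1)) ≤ 1 / 16 - 1 / n := by
  intro n hn
  induction n with
  | zero => omega
  | succ m ih =>
    rcases Nat.lt_or_ge m 16 with h | h
    · have : m = 15 := by omega
      subst this
      norm_num
    · rw [← Finset.Ico_add_one_right_eq_Icc, Finset.sum_Ico_succ_top (by omega), Finset.Ico_add_one_right_eq_Icc]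
      have hm : (0:ℝ) < m := by positivity
      have hm1 : (0:ℝ) < (m:ℝ) + 1 := by positivity
      have key : (1:ℝ) / ((m+1) * ((m+1) - 1)) = 1 / m - 1 / (m+1) := by
        field_simp
        ring
        exact mul_inv_cancel₀ hm.ne'
      have := ih h
      push_cast at key ⊢
      linarith

private lemma prime_sum_le (n : ℕ) :
    ∑ q ∈ {q ∈ Finset.Icc 2 n | q.Prime}, ((n / q : ℕ) : ℝ) ^ 2 ≤ (n : ℝ) ^ 2 / 2 := by
  classical
  set T := {q ∈ Finset.Icc 2 n | q.Prime} with hT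
  have cast_le : ∀ q : ℕ, 1 ≤ q → ((n / q : ℕ) : ℝ) ^ 2 ≤ (n : ℝ) ^ 2 / (q : ℝ) ^ 2 := by
    intro q hq
    have hq0 : (0:ℝ) < q := by positivity
    have h1 : ((n / q : ℕ) : ℝ) ≤ (n : ℝ) / q := Nat.cast_div_le
    have h2 : (0:ℝ) ≤ ((n / q : ℕ) : ℝ) := by positivity
    calc ((n / q : ℕ) : ℝ) ^ 2 ≤ ((n:ℝ)/q) ^ 2 := by gcongr
      _ = (n : ℝ) ^ 2 / (q : ℝ) ^ 2 := by rw [div_pow]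
  rw [← Finset.sum_filter_add_sum_filter_not T (fun q => q ≤ 16)]
  have part1 : ∑ q ∈ {q ∈ T | q ≤ 16}, ((n / q : ℕ) : ℝ) ^ 2
      ≤ ∑ q ∈ ({2, 3, 5, 7, 11, 13} : Finset ℕ), (n : ℝ) ^ 2 / (q : ℝ) ^ 2 := by
    have hsub : {q ∈ T | q ≤ 16} ⊆ ({2, 3, 5, 7, 11, 13} : Finset ℕ) := by
      intro q hq
      simp only [hT, Finset.mem_filter, Finset.mem_Icc] at hq
      obtain ⟨⟨⟨h2, _⟩, hp⟩, h16⟩ := hq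
      interval_cases q <;> first | (exfalso; exact absurd hp (by decide)) | simp
    calc ∑ q ∈ {q ∈ T | q ≤ 16}, ((n / q : ℕ) : ℝ) ^ 2
        ≤ ∑ q ∈ {q ∈ T | q ≤ 16}, (n : ℝ) ^ 2 / (q : ℝ) ^ 2 := by
          refine Finset.sum_le_sum fun q hq => cast_le q ?_
          simp only [hT, Finset.mem_filter, Finset.mem_Icc] at hq
          omega
      _ ≤ _ := by
          refine Finset.sum_le_sum_of_subset_of_nonneg hsub fun q hq _ => by positivity
  have part2 : ∑ q ∈ {q ∈ T | ¬ q ≤ 16}, ((n / q : ℕ) : ℝ) ^ 2 ≤ (n : ℝ) ^ 2 / 16 := by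
    have step1 : ∑ q ∈ {q ∈ T | ¬ q ≤ 16}, ((n / q : ℕ) : ℝ) ^ 2
        ≤ ∑ q ∈ {q ∈ T | ¬ q ≤ 16}, (n : ℝ) ^ 2 * (1 / (q * ((q:ℝ) - 1))) := by
      refine Finset.sum_le_sum fun q hq => ?_
      simp only [hT, Finset.mem_filter, Finset.mem_Icc] at hq
      have h17 : 17 ≤ q := by omega
      have hq1 : (1:ℝ) ≤ (q:ℝ) - 1 := by
        have : (17:ℝ) ≤ q := by exact_mod_cast h17
        linarith
      have hqq : (q:ℝ) * ((q:ℝ) - 1) ≤ (q:ℝ) ^ 2 := by nlinarith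
      have hpos : (0:ℝ) < (q:ℝ) * ((q:ℝ) - 1) := by nlinarith
      calc ((n / q : ℕ) : ℝ) ^ 2 ≤ (n : ℝ) ^ 2 / (q : ℝ) ^ 2 := cast_le q (by omega)
        _ ≤ (n : ℝ) ^ 2 / ((q:ℝ) * ((q:ℝ) - 1)) := by
            apply div_le_div_of_nonneg_left (by positivity) hpos hqq
        _ = (n : ℝ) ^ 2 * (1 / (q * ((q:ℝ) - 1))) := by ring
    have hsub2 : {q ∈ T | ¬ q ≤ 16} ⊆ Finset.Icc 17 n := by
      intro q hq
      simp only [hT, Finset.mem_filter, Finset.mem_Icc] at hq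
      exact Finset.mem_Icc.2 (by omega)
    have step2 : ∑ q ∈ {q ∈ T | ¬ q ≤ 16}, (n : ℝ) ^ 2 * (1 / (q * ((q:ℝ) - 1)))
        ≤ ∑ q ∈ Finset.Icc 17 n, (n : ℝ) ^ 2 * (1 / (q * ((q:ℝ) - 1))) := by
      refine Finset.sum_le_sum_of_subset_of_nonneg hsub2 fun q hq _ => ?_
      have h17 : 17 ≤ q := (Finset.mem_Icc.1 hq).1
      have : (17:ℝ) ≤ (q:ℝ) := by exact_mod_cast h17
      have : (0:ℝ) < (q:ℝ) * ((q:ℝ) - 1) := by nlinarith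
      positivity
    have step3 : ∑ q ∈ Finset.Icc 17 n, (n : ℝ) ^ 2 * (1 / (q * ((q:ℝ) - 1)))
        ≤ (n : ℝ) ^ 2 / 16 := by
      rw [← Finset.mul_sum]
      rcases Nat.lt_or_ge n 16 with h | h
      · have : Finset.Icc 17 n = ∅ := by
          apply Finset.Icc_eq_empty; omega
        rw [this]
        simp
        positivity
      · have := tele n h
        have hn0 : (0:ℝ) < n := by
          have : (16:ℝ) ≤ n := by exact_mod_cast h
          linarith
        have h1n : (0:ℝ) ≤ 1 / (n:ℝ) := by positivity
        calc (n:ℝ)^2 * ∑ d ∈ Finset.Icc 17 n, (1:ℝ) / (d * ((d:ℝ) - 1))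
            ≤ (n:ℝ)^2 * (1/16 - 1/n) := by
              apply mul_le_mul_of_nonneg_left this (by positivity)
          _ ≤ (n:ℝ)^2 / 16 := by nlinarith
    exact le_trans step1 (le_trans step2 step3)
  have : ∑ q ∈ ({2, 3, 5, 7, 11, 13} : Finset ℕ), (n : ℝ) ^ 2 / (q : ℝ) ^ 2
      + (n : ℝ) ^ 2 / 16 ≤ (n : ℝ) ^ 2 / 2 := by
    have hn2 : (0:ℝ) ≤ (n:ℝ)^2 := by positivity
    norm_num [Finset.sum_insert, Finset.mem_insert, Finset.mem_singleton]
    nlinarith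
  linarith

private lemma ratdiv_num_den {a b : ℕ} (hb : 1 ≤ b) (hc : Nat.Coprime a b) :
    ((a : ℚ) / (b : ℚ)).num = a ∧ ((a : ℚ) / (b : ℚ)).den = b := by
  have hb0 : (0 : ℤ) < (b : ℤ) := by exact_mod_cast hb
  have hc' : Nat.Coprime (a : ℤ).natAbs (b : ℤ).natAbs := by simpa using hc
  have h1 : (((a : ℤ) : ℚ) / ((b : ℤ) : ℚ)).num = (a : ℤ) :=
    Rat.num_div_eq_of_coprime hb0 hc'
  have h2 : ((((a : ℤ) : ℚ) / ((b : ℤ) : ℚ)).den : ℤ) = (b : ℤ) :=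
    Rat.den_div_eq_of_coprime hb0 hc'
  simp only [Int.cast_natCast] at h1 h2
  exact ⟨h1, by exact_mod_cast h2⟩

private lemma num_le_den_of_le_one {q : ℚ} (hq1 : q ≤ 1) : q.num ≤ (q.den : ℤ) := by
  have hden : (0 : ℚ) < (q.den : ℚ) := by
    exact_mod_cast q.pos
  have h : (q.num : ℚ) / (q.den : ℚ) ≤ 1 := by rw [Rat.num_div_den]; exact hq1
  have := (div_le_one hden).1 h
  exact_mod_cast this

private lemma fareySet_card (n : ℕ) (hn : 1 ≤ n) :
    (fareySet n).card =
      #{p ∈ Finset.Icc 1 n ×ˢ Finset.Icc 1 n | p.1 ≤ p.2 ∧ p.2.Coprime p.1} + 1 := by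
  classical
  set P := {p ∈ Finset.Icc 1 n ×ˢ Finset.Icc 1 n | p.1 ≤ p.2 ∧ p.2.Coprime p.1} with hP
  have h01 : ((0, 1) : ℕ × ℕ) ∉ P := by
    simp [hP, Finset.mem_product]
  rw [← Finset.card_insert_of_notMem h01]
  apply Finset.card_bij (fun q _ => (q.num.toNat, q.den))
  · -- maps to target
    rintro q hq
    simp only [fareySet, Finset.mem_filter] at hq
    obtain ⟨-, hq0, hq1, hqden⟩ := hq
    rcases eq_or_lt_of_le hq0 with h0 | h0
    · rw [← h0]
      simp
    · have hnum : 0 < q.num := Rat.num_pos.2 h0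
      have hled : q.num ≤ (q.den : ℤ) := num_le_den_of_le_one hq1
      refine Finset.mem_insert_of_mem (Finset.mem_filter.2 ⟨?_, ?_, ?_⟩)
      · refine Finset.mem_product.2 ⟨Finset.mem_Icc.2 ⟨by omega, ?_⟩,
          Finset.mem_Icc.2 ⟨q.pos, hqden⟩⟩
        omega
      · simp only
        omega
      · simp only
        have := q.reduced
        rw [Nat.coprime_comm] at this
        have heq : q.num.toNat = q.num.natAbs := by omega
        rwa [heq]
  · -- injective
    rintro q hq q' hq' h
    simp only [fareySet, Finset.mem_filter] at hq hq'
    have h1 : q.num = q'.num := by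
      have := congrArg Prod.fst h
      simp only at this
      have e0 : 0 ≤ q.num := Rat.num_nonneg.2 hq.2.1
      have e0' : 0 ≤ q'.num := Rat.num_nonneg.2 hq'.2.1
      omega
    have h2 : q.den = q'.den := congrArg Prod.snd h
    exact Rat.ext h1 h2
  · -- surjective
    rintro ⟨a, b⟩ hab
    rcases Finset.mem_insert.1 hab with h | h
    · obtain ⟨rfl, rfl⟩ := Prod.mk.injEq .. ▸ h
      refine ⟨0, ?_, by simp⟩
      simp only [fareySet, Finset.mem_filter]
      refine ⟨Finset.mem_image.2 ⟨(0, 1), ?_, by norm_num⟩, by norm_num [hn]⟩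
      simp only [Finset.mem_product, Finset.mem_range]
      omega
    · simp only [hP, Finset.mem_filter, Finset.mem_product, Finset.mem_Icc] at h
      obtain ⟨⟨⟨ha1, han⟩, hb1, hbn⟩, hab', hc⟩ := h
      have hcop : Nat.Coprime a b := Nat.coprime_comm.1 hc
      obtain ⟨hnum, hden⟩ := ratdiv_num_den hb1 hcop
      have hb0 : (0 : ℚ) < (b : ℚ) := by exact_mod_cast hb1
      refine ⟨(a : ℚ) / (b : ℚ), ?_, ?_⟩
      · simp only [fareySet, Finset.mem_filter]
        refine ⟨Finset.mem_image.2 ⟨(a, b), ?_, rfl⟩, by positivity, ?_, ?_⟩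
        · simp only [Finset.mem_product, Finset.mem_range]
          omega
        · rw [div_le_one hb0]
          exact_mod_cast hab'
        · rw [hden]; exact hbn
      · rw [hnum, hden]
        simp

/-- For every positive integer `n`, the number `N` of fractions in the Farey sequence of
order `n` satisfies `N > n²/4`; equivalently, `1 + ∑_{i=1}^{n} φ(i) > n²/4`. -/
theorem farey_card_gt_sq_div_four (n : ℕ) (hn : 1 ≤ n) :
    (n : ℝ) ^ 2 / 4 < ((fareySet n).card : ℝ) ∧
    (n : ℝ) ^ 2 / 4 < ((1 + ∑ i ∈ Finset.Icc 1 n, Nat.totient i : ℕ) : ℝ) := by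
  classical
  set S := ∑ i ∈ Finset.Icc 1 n, Nat.totient i with hS
  set C := #{p ∈ Finset.Icc 1 n ×ˢ Finset.Icc 1 n | p.1.Coprime p.2} with hC
  have h1 : n ^ 2 ≤ C + ∑ q ∈ {q ∈ Finset.Icc 2 n | q.Prime}, (n / q) ^ 2 := bad_bound n
  have h2 : C + 1 ≤ 2 * S := two_S_ge n hn
  have h1R : (n : ℝ) ^ 2 ≤ (C : ℝ) + (n : ℝ) ^ 2 / 2 := by
    have hcast : ((∑ q ∈ {q ∈ Finset.Icc 2 n | q.Prime}, (n / q) ^ 2 : ℕ) : ℝ)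
        = ∑ q ∈ {q ∈ Finset.Icc 2 n | q.Prime}, ((n / q : ℕ) : ℝ) ^ 2 := by
      push_cast
      rfl
    have := prime_sum_le n
    have h1' : ((n ^ 2 : ℕ) : ℝ) ≤
        ((C + ∑ q ∈ {q ∈ Finset.Icc 2 n | q.Prime}, (n / q) ^ 2 : ℕ) : ℝ) := by
      exact_mod_cast h1
    push_cast at h1'
    rw [show ((n:ℝ)^2 = ((n:ℕ):ℝ)^2) from rfl] at this
    linarith [hcast ▸ this]
  have h2R : (C : ℝ) + 1 ≤ 2 * (S : ℝ) := by exact_mod_cast h2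
  have hSR : (n : ℝ) ^ 2 / 4 < (S : ℝ) := by linarith
  rw [hS] at hSR
  push_cast at hSR
  constructor
  · rw [fareySet_card n hn, cardP n]
    push_cast
    linarith
  · push_cast
    linarith
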